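/- Define L : ℝ^l → ℝ by L(s) = ∫ |Zᵀs| · S(Z) p(Z) dZ, where S ≥ 0 and p ≥ 0 are integrable with ∫ S(Z)p(Z)dZ < ∞, and suppose S(Z)p(Z) > 0 on a set of Z not contained in any hyperplane. Then the function C(s,t) = (L(s) + L(t) − L(s−t))/2 is a positive semidefinite kernel on ℝ^l, i.e., for any s₁,…,s_m ∈ ℝ^l and c₁,…,c_m ∈ ℝ with Σ cᵢ = 0 or in general, Σᵢⱼ cᵢcⱼ C(sᵢ, sⱼ) ≥ 0, and moreover C(s,s) = L(s) and L(s) > 0 for s ≠ 0. -/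

import Mathlib

open MeasureTheory
open scoped InnerProductSpace

lemma abs_kernel_eq (a b : ℝ) :
    (|a| + |b| - |a - b|) / 2
      = min (max a 0) (max b 0) + min (max (-a) 0) (max (-b) 0) := by
  rcases le_total a b with hab | hab
  · rw [abs_of_nonpos (sub_nonpos.2 hab)]
    rcases le_total a 0 with ha | ha <;> rcases le_total b 0 with hb | hb <;>
      simp [abs_of_nonneg, abs_of_nonpos, ha, hb, min_def, max_def] <;>
      first | (split_ifs <;> linarith) | linarith
  · rw [abs_of_nonneg (sub_nonneg.2 hab)]
    rcases le_total a 0 with ha | ha <;> rcases le_total b 0 with hb | hb <;>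
      simp [abs_of_nonneg, abs_of_nonpos, ha, hb, min_def, max_def] <;>
      first | (split_ifs <;> linarith) | linarith | (intro; linarith)

lemma indicator_int (a : ℝ) :
    Integrable ((Set.Ioc (0:ℝ) a).indicator (fun _ => (1:ℝ))) := by
  refine (integrable_indicator_iff measurableSet_Ioc).2 ?_
  exact integrableOn_const (by simp [Real.volume_Ioc])

lemma min_kernel_psd (m : ℕ) (c : Fin m → ℝ) (x : Fin m → ℝ) (hx : ∀ i, 0 ≤ x i) :
    0 ≤ ∑ i, ∑ j, c i * c j * min (x i) (x j) := by
  classical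
  set f : Fin m → ℝ → ℝ := fun i => (Set.Ioc (0:ℝ) (x i)).indicator (fun _ => (1:ℝ)) with hf
  have hprod : ∀ i j, (fun u => f i u * f j u)
      = (Set.Ioc (0:ℝ) (min (x i) (x j))).indicator (fun _ => (1:ℝ)) := by
    intro i j
    funext u
    rw [hf]
    simp only
    rw [← Set.inter_indicator_mul (fun _ => (1:ℝ)) (fun _ => (1:ℝ))]
    simp [Set.Ioc_inter_Ioc]
  have hpint : ∀ i j, Integrable (fun u => f i u * f j u) := by
    intro i j; rw [hprod i j]; exact indicator_int _
  have hval : ∀ i j, ∫ u, f i u * f j u = min (x i) (x j) := by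
    intro i j
    rw [hprod i j, integral_indicator_const (1:ℝ) measurableSet_Ioc]
    simp [Real.volume_Ioc, ENNReal.toReal_ofReal (le_min (hx i) (hx j)), hx]
  have hterm : ∀ i j, Integrable (fun u => (c i * f i u) * (c j * f j u)) := by
    intro i j
    have : (fun u => (c i * f i u) * (c j * f j u))
        = fun u => (c i * c j) * (f i u * f j u) := by funext u; ring
    rw [this]; exact (hpint i j).const_mul _
  have key : ∑ i, ∑ j, c i * c j * min (x i) (x j)
      = ∫ u, (∑ i, c i * f i u)^2 := by
    have hsq : ∀ u, (∑ i, c i * f i u)^2 = ∑ i, ∑ j, (c i * f i u) * (c j * f j u) := by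
      intro u; rw [sq, Finset.sum_mul_sum]
    simp_rw [hsq]
    rw [integral_finset_sum _ (fun i _ => integrable_finset_sum _ (fun j _ => hterm i j))]
    refine Finset.sum_congr rfl fun i _ => ?_
    rw [integral_finset_sum _ (fun j _ => hterm i j)]
    refine Finset.sum_congr rfl fun j _ => ?_
    have : (fun u => (c i * f i u) * (c j * f j u))
        = fun u => (c i * c j) * (f i u * f j u) := by funext u; ring
    rw [this, integral_const_mul, hval]
  rw [key]
  exact integral_nonneg fun u => sq_nonneg _

lemma abs_kernel_psd (m : ℕ) (c : Fin m → ℝ) (a : Fin m → ℝ) :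
    0 ≤ ∑ i, ∑ j, c i * c j * ((|a i| + |a j| - |a i - a j|) / 2) := by
  have h : ∀ i j, c i * c j * ((|a i| + |a j| - |a i - a j|) / 2)
      = c i * c j * min (max (a i) 0) (max (a j) 0)
        + c i * c j * min (max (-(a i)) 0) (max (-(a j)) 0) := by
    intro i j; rw [abs_kernel_eq]; ring
  simp_rw [h, Finset.sum_add_distrib]
  exact add_nonneg (min_kernel_psd m c _ fun i => le_max_right _ _)
    (min_kernel_psd m c _ fun i => le_max_right _ _)

/-- The covariance kernel `C(s,t) = (L(s)+L(t)−L(s−t))/2`, with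
`L(s) = ∫ |Zᵀs| S(Z) p(Z) dZ`, is positive semidefinite, `C(s,s) = L(s)`,
and `L(s) > 0` for `s ≠ 0`. -/
theorem stmt_13 {l : ℕ} (S p : EuclideanSpace ℝ (Fin l) → ℝ)
    (hS : ∀ z, 0 ≤ S z) (hp : ∀ z, 0 ≤ p z)
    (hSp : Integrable (fun z => S z * p z)
      (volume : Measure (EuclideanSpace ℝ (Fin l))))
    (hInt : ∀ s : EuclideanSpace ℝ (Fin l),
      Integrable (fun z => |⟪z, s⟫_ℝ| * (S z * p z))
        (volume : Measure (EuclideanSpace ℝ (Fin l))))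
    -- the set where `S p > 0` is not (essentially) contained in any hyperplane
    (hhyp : ∀ s : EuclideanSpace ℝ (Fin l), s ≠ 0 →
      0 < (volume : Measure (EuclideanSpace ℝ (Fin l)))
        {z | 0 < S z * p z ∧ ⟪z, s⟫_ℝ ≠ 0}) :
    (∀ (m : ℕ) (c : Fin m → ℝ) (sv : Fin m → EuclideanSpace ℝ (Fin l)),
      0 ≤ ∑ i, ∑ j, c i * c j *
        (((∫ z, |⟪z, sv i⟫_ℝ| * (S z * p z))
          + (∫ z, |⟪z, sv j⟫_ℝ| * (S z * p z))
          - ∫ z, |⟪z, sv i - sv j⟫_ℝ| * (S z * p z)) / 2))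
    ∧ (∀ s : EuclideanSpace ℝ (Fin l),
        ((∫ z, |⟪z, s⟫_ℝ| * (S z * p z)) + (∫ z, |⟪z, s⟫_ℝ| * (S z * p z))
          - ∫ z, |⟪z, s - s⟫_ℝ| * (S z * p z)) / 2 = ∫ z, |⟪z, s⟫_ℝ| * (S z * p z))
    ∧ (∀ s : EuclideanSpace ℝ (Fin l), s ≠ 0 →
        0 < ∫ z, |⟪z, s⟫_ℝ| * (S z * p z)) := by
  refine ⟨?_, ?_, ?_⟩
  · intro m c sv
    have hterm : ∀ i j : Fin m, Integrable (fun z =>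
        c i * c j * ((|⟪z, sv i⟫_ℝ| + |⟪z, sv j⟫_ℝ| - |⟪z, sv i - sv j⟫_ℝ|) / 2
          * (S z * p z))) (volume : Measure (EuclideanSpace ℝ (Fin l))) := by
      intro i j
      have heq : (fun z : EuclideanSpace ℝ (Fin l) =>
          c i * c j * ((|⟪z, sv i⟫_ℝ| + |⟪z, sv j⟫_ℝ| - |⟪z, sv i - sv j⟫_ℝ|) / 2
            * (S z * p z)))
          = fun z => (c i * c j / 2) *
            ((|⟪z, sv i⟫_ℝ| * (S z * p z) + |⟪z, sv j⟫_ℝ| * (S z * p z))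
              - |⟪z, sv i - sv j⟫_ℝ| * (S z * p z)) := by
        funext z; ring
      rw [heq]
      exact (((hInt (sv i)).add (hInt (sv j))).sub (hInt (sv i - sv j))).const_mul _
    have hsum : ∑ i, ∑ j, c i * c j *
        (((∫ z, |⟪z, sv i⟫_ℝ| * (S z * p z))
          + (∫ z, |⟪z, sv j⟫_ℝ| * (S z * p z))
          - ∫ z, |⟪z, sv i - sv j⟫_ℝ| * (S z * p z)) / 2)
        = ∫ z, ∑ i, ∑ j, c i * c j *
            ((|⟪z, sv i⟫_ℝ| + |⟪z, sv j⟫_ℝ| - |⟪z, sv i - sv j⟫_ℝ|) / 2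
              * (S z * p z)) := by
      rw [integral_finset_sum _ (fun i _ => integrable_finset_sum _ (fun j _ => hterm i j))]
      refine Finset.sum_congr rfl fun i _ => ?_
      rw [integral_finset_sum _ (fun j _ => hterm i j)]
      refine Finset.sum_congr rfl fun j _ => ?_
      have heq : (fun z : EuclideanSpace ℝ (Fin l) =>
          c i * c j * ((|⟪z, sv i⟫_ℝ| + |⟪z, sv j⟫_ℝ| - |⟪z, sv i - sv j⟫_ℝ|) / 2
            * (S z * p z)))
          = fun z => (c i * c j / 2) *
            ((|⟪z, sv i⟫_ℝ| * (S z * p z) + |⟪z, sv j⟫_ℝ| * (S z * p z))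
              - |⟪z, sv i - sv j⟫_ℝ| * (S z * p z)) := by
        funext z; ring
      have hadd : Integrable (fun z : EuclideanSpace ℝ (Fin l) =>
          |⟪z, sv i⟫_ℝ| * (S z * p z) + |⟪z, sv j⟫_ℝ| * (S z * p z))
          (volume : Measure (EuclideanSpace ℝ (Fin l))) := (hInt (sv i)).add (hInt (sv j))
      rw [heq, integral_const_mul, integral_sub hadd (hInt (sv i - sv j)),
        integral_add (hInt (sv i)) (hInt (sv j))]
      ring
    rw [hsum]
    refine integral_nonneg fun z => ?_
    have h0 : 0 ≤ S z * p z := mul_nonneg (hS z) (hp z)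
    calc (0:ℝ) ≤ (∑ i, ∑ j, c i * c j *
          ((|⟪z, sv i⟫_ℝ| + |⟪z, sv j⟫_ℝ| - |⟪z, sv i⟫_ℝ - ⟪z, sv j⟫_ℝ|) / 2))
          * (S z * p z) :=
        mul_nonneg (abs_kernel_psd m c fun i => ⟪z, sv i⟫_ℝ) h0
      _ = ∑ i, ∑ j, c i * c j *
          ((|⟪z, sv i⟫_ℝ| + |⟪z, sv j⟫_ℝ| - |⟪z, sv i - sv j⟫_ℝ|) / 2 * (S z * p z)) := by
        rw [Finset.sum_mul]
        refine Finset.sum_congr rfl fun i _ => ?_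
        rw [Finset.sum_mul]
        refine Finset.sum_congr rfl fun j _ => ?_
        rw [inner_sub_right]
        ring
  · intro s
    have h0 : (fun z : EuclideanSpace ℝ (Fin l) => |⟪z, s - s⟫_ℝ| * (S z * p z))
        = fun _ => (0:ℝ) := by
      funext z; simp
    rw [h0, integral_zero]
    ring
  · intro s hs
    have hne : {z : EuclideanSpace ℝ (Fin l) | 0 < S z * p z ∧ ⟪z, s⟫_ℝ ≠ 0}
        ⊆ Function.support (fun z => |⟪z, s⟫_ℝ| * (S z * p z)) := by
      intro z hz
      exact mul_ne_zero (abs_ne_zero.2 hz.2) (ne_of_gt hz.1)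
    exact (integral_pos_iff_support_of_nonneg
      (fun z => mul_nonneg (abs_nonneg _) (mul_nonneg (hS z) (hp z))) (hInt s)).2
      (lt_of_lt_of_le (hhyp s hs) (measure_mono hne))
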